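/- For each m ∈ {1,2}, if z ∈ C³ with ‖z‖ = 1 and |z₂|² + |z₃|² = ε, let z' = (ω⁻ᵏz₁, ω^{−k+1}z₂, ω^{−k+2}z₃) for k ∈ {0,1,2} with ω = e^{2πi/3}. Then Θ₁(z') = Θ₁(z)·diag(1, ω, ω²), where Θ₁ is the glueing matrix defined above. -/
import Mathlib


open Complex Matrix

noncomputable def Θ₁ (ε : ℝ) (z : Fin 3 → ℂ) : Matrix (Fin 3) (Fin 3) ℂ :=
  ((Real.sqrt (ε * (1 - ε)) : ℂ)⁻¹) •
    !![(Real.sqrt (ε * (1 - ε)) : ℂ), 0, 0;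
       0, (starRingEnd ℂ) (z 0) * z 1, -((starRingEnd ℂ) (z 0) * z 2);
       0, z 0 * (starRingEnd ℂ) (z 2), z 0 * (starRingEnd ℂ) (z 1)]

noncomputable def Θ₂ (ε : ℝ) (z : Fin 3 → ℂ) : Matrix (Fin 3) (Fin 3) ℂ :=
  ((Real.sqrt (ε * (1 - ε)) : ℂ)⁻¹) •
    !![(starRingEnd ℂ) (z 0) * z 1, -(z 0 * (starRingEnd ℂ) (z 2)), 0;
       (starRingEnd ℂ) (z 0) * z 2, z 0 * (starRingEnd ℂ) (z 1), 0;
       0, 0, (Real.sqrt (ε * (1 - ε)) : ℂ)]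


noncomputable def ω : ℂ := Complex.exp (2 * Real.pi * Complex.I / 3)

lemma omega_ne_zero : ω ≠ 0 := Complex.exp_ne_zero _

lemma omega_cube : ω ^ 3 = 1 := by
  rw [ω, ← Complex.exp_nat_mul]
  rw [show ((3:ℕ) : ℂ) * (2 * Real.pi * Complex.I / 3) = 2 * Real.pi * Complex.I by push_cast; ring]
  exact Complex.exp_two_pi_mul_I

lemma omega_conj : (starRingEnd ℂ) ω = ω⁻¹ := by
  rw [ω, ← Complex.exp_conj, ← Complex.exp_neg]
  congr 1
  simp [Complex.ext_iff]
  norm_num [Complex.div_re, Complex.div_im, Complex.normSq]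
  ring

lemma omega_inv : ω⁻¹ = ω ^ 2 := by
  have h : ω * ω ^ 2 = 1 := by rw [← pow_succ']; exact omega_cube
  exact inv_eq_of_mul_eq_one_right h

lemma omega_conj_zpow (n : ℤ) : (starRingEnd ℂ) (ω ^ n) = ω ^ (-n) := by
  rw [map_zpow₀, omega_conj, _root_.inv_zpow, ← _root_.zpow_neg]

lemma omega_zpow_neg_two : ω ^ (-2 : ℤ) = ω := by
  have : ω ^ (-2 : ℤ) * ω ^ (3 : ℤ) = ω := by
    rw [← zpow_add₀ omega_ne_zero]; norm_num
  calc ω ^ (-2 : ℤ) = ω ^ (-2 : ℤ) * ω ^ (3 : ℤ) := by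
        rw [show (3:ℤ) = (3:ℕ) by norm_num, zpow_natCast, omega_cube, mul_one]
    _ = ω := this

lemma omega_zpow_neg_one : ω ^ (-1 : ℤ) = ω ^ 2 := by
  rw [_root_.zpow_neg_one, omega_inv]

lemma keyA (k : ℕ) : ((starRingEnd ℂ) ω ^ k)⁻¹ * ω ^ (1 - (k:ℤ)) = ω := by
  rw [omega_conj, inv_pow, inv_inv, ← zpow_natCast ω k, ← zpow_add₀ omega_ne_zero,
    show (k:ℤ) + (1 - k) = 1 by ring, zpow_one]

lemma keyB (k : ℕ) : ((starRingEnd ℂ) ω ^ k)⁻¹ * ω ^ (2 - (k:ℤ)) = ω ^ 2 := by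
  rw [omega_conj, inv_pow, inv_inv, ← zpow_natCast ω k, ← zpow_add₀ omega_ne_zero,
    show (k:ℤ) + (2 - k) = ((2:ℕ):ℤ) by push_cast; ring, zpow_natCast]

lemma keyC (k : ℕ) : (ω ^ k)⁻¹ * (starRingEnd ℂ) ω ^ (2 - (k:ℤ)) = ω := by
  rw [omega_conj, _root_.inv_zpow, ← _root_.zpow_neg, ← zpow_natCast ω k, ← _root_.zpow_neg,
    ← zpow_add₀ omega_ne_zero, show -(k:ℤ) + -(2 - k) = -2 by ring, omega_zpow_neg_two]

lemma keyD (k : ℕ) : (ω ^ k)⁻¹ * (starRingEnd ℂ) ω ^ (1 - (k:ℤ)) = ω ^ 2 := by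
  rw [omega_conj, _root_.inv_zpow, ← _root_.zpow_neg, ← zpow_natCast ω k, ← _root_.zpow_neg,
    ← zpow_add₀ omega_ne_zero, show -(k:ℤ) + -(1 - k) = -1 by ring, omega_zpow_neg_one]

theorem Theta₁_twist (ε : ℝ) (hε : 0 < ε) (hε' : ε < 1 / 9)
    (z : Fin 3 → ℂ) (hz : (∑ i, ‖z i‖ ^ 2) = 1) (hz' : ‖z 1‖ ^ 2 + ‖z 2‖ ^ 2 = ε)
    (k : ℕ) (hk : k ≤ 2) :
    Θ₁ ε ![ω ^ (-(k : ℤ)) * z 0, ω ^ (1 - (k : ℤ)) * z 1, ω ^ (2 - (k : ℤ)) * z 2] =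
      Θ₁ ε z * !![1, 0, 0; 0, ω, 0; 0, 0, ω ^ 2] := by
  have hA := keyA k
  have hB := keyB k
  have hC := keyC k
  have hD := keyD k
  ext i j
  fin_cases i <;> fin_cases j <;>
    simp [Θ₁, Matrix.mul_apply, Fin.sum_univ_succ] <;>
    first
    | (right; simp [Matrix.vecHead, Matrix.vecTail])
    | linear_combination ((Real.sqrt (ε * (1 - ε)) : ℂ))⁻¹ * (starRingEnd ℂ) (z 0) * z 1 * hA
    | linear_combination ((Real.sqrt (ε * (1 - ε)) : ℂ))⁻¹ * (starRingEnd ℂ) (z 0) * z 2 * hB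
    | linear_combination ((Real.sqrt (ε * (1 - ε)) : ℂ))⁻¹ * z 0 * (starRingEnd ℂ) (z 2) * hC
    | linear_combination ((Real.sqrt (ε * (1 - ε)) : ℂ))⁻¹ * z 0 * (starRingEnd ℂ) (z 1) * hD
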